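/- Let b, c, ν, ρ ∈ ℂ with Re(ρ) > 0, Re(c) > 0 and Re(ν) > -1, and let z > 0 be real. Then G_ν^{(b,c)}(z;ρ) = (z/2)^ν / (Γ(ν+1)² Γ(c)) · ∫_0^1 u^{c+ν-1} (1-u)^{-c-ν-1} · exp( -(u² + ρ(1-u)²) / (u(1-u)) ) · ₀F₃(-; ν+1, (ν+1)/2, (ν+2)/2; -b z² u² / (16(1-u)²)) du, the integral being over real u ∈ (0,1). -/

import Mathlib

open Complex MeasureTheory Real Set

/-- Extended Gamma function `Γ_ρ(x) = ∫_0^∞ t^(x-1) e^(-t-ρ/t) dt`. -/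
noncomputable def extGamma (ρ x : ℂ) : ℂ :=
  ∫ t in Ioi (0:ℝ), (t:ℂ) ^ (x - 1) * Complex.exp (-(t:ℂ) - ρ / (t:ℂ))

/-- Generalized Pochhammer symbol `(c;ρ)_μ = Γ_ρ(c+μ)/Γ(c)`. -/
noncomputable def genPoch (c ρ μ : ℂ) : ℂ := extGamma ρ (c + μ) / Complex.Gamma c

/-- Unified four parameter Bessel function `G_ν^{(b,c)}(z;ρ)` with complex order,
powers being principal complex powers. -/
noncomputable def unifiedG (b c ν ρ z : ℂ) : ℂ :=
  ∑' k : ℕ, (-b) ^ k * genPoch c ρ (2 * (k:ℂ) + ν) * (z / 2) ^ (2 * (k:ℂ) + ν) /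
    ((k.factorial : ℂ) * Complex.Gamma (ν + (k:ℂ) + 1) * Complex.Gamma (ν + 2 * (k:ℂ) + 1))

/-- Unified four parameter Bessel function with integer order, powers being integer powers. -/
noncomputable def unifiedGInt (b c ρ : ℂ) (ν : ℤ) (z : ℂ) : ℂ :=
  ∑' k : ℕ, (-b) ^ k * genPoch c ρ (2 * (k:ℂ) + (ν:ℂ)) * (z / 2) ^ (2 * (k:ℤ) + ν) /
    ((k.factorial : ℂ) * Complex.Gamma ((ν:ℂ) + (k:ℂ) + 1) * Complex.Gamma ((ν:ℂ) + 2 * (k:ℂ) + 1))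

/-- Pochhammer symbol `(a)_k = Γ(a+k)/Γ(a)`. -/
noncomputable def poch (a : ℂ) (k : ℕ) : ℂ := Complex.Gamma (a + (k:ℂ)) / Complex.Gamma a

/-- Generalized hypergeometric function `₀F₃`. -/
noncomputable def hyp0F3 (a₁ a₂ a₃ w : ℂ) : ℂ :=
  ∑' k : ℕ, w ^ k / (poch a₁ k * poch a₂ k * poch a₃ k * (k.factorial : ℂ))

/-- Generalized hypergeometric function `₂F₃`. -/
noncomputable def hyp2F3 (a₁ a₂ b₁ b₂ b₃ w : ℂ) : ℂ :=
  ∑' k : ℕ, poch a₁ k * poch a₂ k * w ^ k /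
    (poch b₁ k * poch b₂ k * poch b₃ k * (k.factorial : ℂ))

/-- Bessel function of the first kind `J_μ(z)` for real `z > 0`. -/
noncomputable def besselJ (μ : ℂ) (z : ℝ) : ℂ :=
  ∑' k : ℕ, (-1) ^ k * ((z:ℂ) / 2) ^ (2 * (k:ℂ) + μ) /
    ((k.factorial : ℂ) * Complex.Gamma (μ + (k:ℂ) + 1))

/-- Generalized four parameter spherical Bessel function
`g_ν^{(b,c)}(z;ρ) = √(π/(2z)) · G_{ν+1/2}^{(b,c-1/2)}(z;ρ)`. -/
noncomputable def sphG (b c ν ρ : ℂ) (z : ℝ) : ℂ :=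
  (Real.sqrt (π / (2 * z)) : ℂ) * unifiedG b (c - 1/2) (ν + 1/2) ρ (z:ℂ)

/-- Generalized four parameter Bessel-Clifford function
`C_ν^{(b,λ)}(z;ρ) = z^{-ν/2} · G_ν^{(b,λ)}(2√z;ρ)` for real `z > 0`. -/
noncomputable def cliffC (b lam ν ρ : ℂ) (z : ℝ) : ℂ :=
  (z:ℂ) ^ (-ν / 2) * unifiedG b lam ν ρ ((2 * Real.sqrt z : ℝ) : ℂ)

namespace Stmt3Aux

lemma map_hasDeriv : ∀ u ∈ Ioo (0:ℝ) 1,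
    HasDerivWithinAt (fun u : ℝ => u / (1 - u)) (((1-u)^2)⁻¹) (Ioo 0 1) u := by
  intro u hu
  have h1 : (1:ℝ) - u ≠ 0 := by have := hu.2; intro h; simp only [sub_eq_zero] at h; linarith
  have := (hasDerivAt_id u).div ((hasDerivAt_id u).const_sub 1) h1
  exact (this.congr_deriv (by simp only [id]; rw [inv_eq_one_div]; congr 1; ring)).hasDerivWithinAt

lemma map_inj : InjOn (fun u : ℝ => u / (1 - u)) (Ioo 0 1) := by
  intro u hu v hv h
  have h1 : (1:ℝ) - u ≠ 0 := by have := hu.2; intro h; simp only [sub_eq_zero] at h; linarith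
  have h2 : (1:ℝ) - v ≠ 0 := by have := hv.2; intro h; simp only [sub_eq_zero] at h; linarith
  field_simp at h
  linarith

lemma map_image : (fun u : ℝ => u / (1 - u)) '' (Ioo 0 1) = Ioi 0 := by
  ext t
  constructor
  · rintro ⟨u, hu, rfl⟩
    exact div_pos hu.1 (by linarith [hu.2])
  · intro ht
    refine ⟨t / (1 + t), ⟨div_pos ht (by linarith [mem_Ioi.mp ht]), ?_⟩, ?_⟩
    · rw [div_lt_one (by linarith [mem_Ioi.mp ht])]; linarith
    · have h1t : (1:ℝ) + t ≠ 0 := by have := mem_Ioi.mp ht; positivity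
      field_simp; ring

lemma subst_integral {E : Type*} [NormedAddCommGroup E] [NormedSpace ℝ E] (g : ℝ → E) :
    ∫ t in Ioi (0:ℝ), g t = ∫ u in Ioo (0:ℝ) 1, (((1-u)^2)⁻¹ : ℝ) • g (u / (1 - u)) := by
  rw [← map_image, integral_image_eq_integral_abs_deriv_smul measurableSet_Ioo map_hasDeriv map_inj]
  refine setIntegral_congr_fun measurableSet_Ioo (fun u _ => ?_)
  rw [_root_.abs_of_nonneg (by positivity : (0:ℝ) ≤ ((1-u)^2)⁻¹)]

lemma subst_integrableOn {E : Type*} [NormedAddCommGroup E] [NormedSpace ℝ E] (g : ℝ → E)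
    (hg : IntegrableOn g (Ioi (0:ℝ))) :
    IntegrableOn (fun u : ℝ => (((1-u)^2)⁻¹ : ℝ) • g (u / (1 - u))) (Ioo (0:ℝ) 1) := by
  have := (integrableOn_image_iff_integrableOn_abs_deriv_smul measurableSet_Ioo
    map_hasDeriv map_inj g).mp (by rwa [map_image])
  refine this.congr_fun (fun u _ => ?_) measurableSet_Ioo
  dsimp only
  rw [_root_.abs_of_nonneg (by positivity : (0:ℝ) ≤ ((1-u)^2)⁻¹)]

lemma ofReal_div_cpow {a b : ℝ} (ha : 0 < a) (hb : 0 < b) (w : ℂ) :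
    ((a / b : ℝ) : ℂ) ^ w = (a:ℂ) ^ w * ((b:ℝ):ℂ) ^ (-w) := by
  rw [div_eq_mul_inv, Complex.ofReal_mul, mul_cpow_ofReal_nonneg ha.le (inv_nonneg.mpr hb.le)]
  congr 1
  rw [Complex.ofReal_inv, Complex.inv_cpow _ _ (by
      rw [Complex.arg_ofReal_of_nonneg hb.le]; exact Real.pi_ne_zero.symm), Complex.cpow_neg]

lemma re_div_ofReal (zz : ℂ) (rr : ℝ) : (zz / (rr:ℝ)).re = zz.re / rr := by
  simp

noncomputable def Greal (p a : ℝ) : ℝ := ∫ t in Ioi (0:ℝ), t ^ (a-1) * Real.exp (-t - p/t)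

lemma gR_cont (p a : ℝ) :
    ContinuousOn (fun t : ℝ => t ^ (a-1) * Real.exp (-t - p/t)) (Ioi 0) := by
  refine ContinuousOn.mul (continuousOn_id.rpow_const fun t ht => Or.inl (ne_of_gt ht)) ?_
  exact Real.continuous_exp.comp_continuousOn
    ((continuousOn_id.neg).sub (continuousOn_const.div continuousOn_id fun t ht => ne_of_gt ht))

lemma exp_neg_div_le {p : ℝ} (hp : 0 < p) (n : ℕ) {t : ℝ} (ht : 0 < t) :
    Real.exp (-(p/t)) ≤ n.factorial * t^n / p^n := by
  have hx : 0 < p / t := div_pos hp ht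
  have h1 : (p/t)^n / n.factorial ≤ Real.exp (p/t) := by
    calc (p/t)^n / n.factorial ≤ ∑ i ∈ Finset.range (n+1), (p/t)^i / i.factorial :=
          Finset.single_le_sum (f := fun i => (p/t)^i / (i.factorial : ℝ))
            (fun i _ => by positivity) (Finset.self_mem_range_succ n)
      _ ≤ Real.exp (p/t) := Real.sum_le_exp_of_nonneg hx.le _
  have h2 : 0 < (p/t)^n / n.factorial := by positivity
  rw [Real.exp_neg]
  rw [inv_le_comm₀ (Real.exp_pos _) (by positivity)]
  calc (n.factorial * t^n / p^n)⁻¹ = (p/t)^n / n.factorial := by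
        rw [div_pow]; field_simp
  _ ≤ Real.exp (p/t) := h1

lemma gR_integrable {p : ℝ} (hp : 0 < p) (a : ℝ) :
    IntegrableOn (fun t : ℝ => t ^ (a-1) * Real.exp (-t - p/t)) (Ioi 0) := by
  rw [← Ioc_union_Ioi_eq_Ioi (zero_le_one (α := ℝ)), integrableOn_union]
  constructor
  · set n : ℕ := ⌈1 - a⌉₊ with hn
    have hna : 1 - a ≤ n := Nat.le_ceil _
    refine Integrable.mono' (g := fun _ => (n.factorial : ℝ) / p^n)
      (integrableOn_const measure_Ioc_lt_top.ne)
      (((gR_cont p a).mono Ioc_subset_Ioi_self).aestronglyMeasurable measurableSet_Ioc) ?_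
    rw [ae_restrict_iff' measurableSet_Ioc]
    refine ae_of_all _ fun t ht => ?_
    have ht0 := ht.1
    have ht1 := ht.2
    rw [Real.norm_of_nonneg (by positivity)]
    have e1 : Real.exp (-t - p/t) ≤ n.factorial * t^n / p^n := by
      calc Real.exp (-t - p/t) ≤ Real.exp (-(p/t)) :=
            Real.exp_le_exp.mpr (by nlinarith)
        _ ≤ n.factorial * t^n / p^n := exp_neg_div_le hp n ht0
    calc t ^ (a-1) * Real.exp (-t - p/t) ≤ t ^ (a-1) * (n.factorial * t^n / p^n) := by
          exact mul_le_mul_of_nonneg_left e1 (by positivity)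
      _ = (n.factorial / p^n) * (t ^ (a-1) * t ^ (n:ℝ)) := by
          rw [← Real.rpow_natCast t n]; ring
      _ ≤ (n.factorial / p^n) * 1 := by
          refine mul_le_mul_of_nonneg_left ?_ (by positivity)
          rw [← Real.rpow_add ht0]
          exact Real.rpow_le_one ht0.le ht1 (by linarith)
      _ = (n.factorial : ℝ) / p^n := mul_one _
  · set M : ℝ := max a 1 with hM
    have hM0 : 0 < M := lt_of_lt_of_le zero_lt_one (le_max_right a 1)
    refine Integrable.mono' (g := fun t => Real.exp (-t) * t ^ (M-1))
      ((Real.GammaIntegral_convergent hM0).mono_set (Ioi_subset_Ioi zero_le_one))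
      (((gR_cont p a).mono (Ioi_subset_Ioi zero_le_one)).aestronglyMeasurable
        measurableSet_Ioi) ?_
    rw [ae_restrict_iff' measurableSet_Ioi]
    refine ae_of_all _ fun t ht => ?_
    have ht1 : (1:ℝ) < t := ht
    have ht0 : (0:ℝ) < t := lt_trans zero_lt_one ht1
    rw [Real.norm_of_nonneg (by positivity)]
    calc t ^ (a-1) * Real.exp (-t - p/t) ≤ t ^ (M-1) * Real.exp (-t) := by
          refine mul_le_mul (Real.rpow_le_rpow_of_exponent_le ht1.le
            (by simp [hM, le_max_iff])) (Real.exp_le_exp.mpr ?_) (Real.exp_pos _).le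
            (by positivity)
          nlinarith [div_pos hp ht0]
      _ = Real.exp (-t) * t ^ (M-1) := mul_comm _ _

lemma Greal_nonneg (p a : ℝ) : 0 ≤ Greal p a :=
  setIntegral_nonneg measurableSet_Ioi fun t ht => by
    have : (0:ℝ) < t := ht
    positivity

lemma Greal_le {p : ℝ} (hp : 0 < p) (a : ℝ) (m : ℕ) (hm1 : 1 ≤ m) (hma : a ≤ m) (k : ℕ) :
    Greal p (a + 2*k) ≤ Greal p a + ((m + 2*k).factorial : ℝ) := by
  have hsplit : Greal p (a + 2*k) =
      (∫ t in Ioc (0:ℝ) 1, t ^ (a + 2*k - 1) * Real.exp (-t - p/t)) +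
      ∫ t in Ioi (1:ℝ), t ^ (a + 2*k - 1) * Real.exp (-t - p/t) := by
    rw [Greal, ← Ioc_union_Ioi_eq_Ioi (zero_le_one (α := ℝ)),
      setIntegral_union (Ioc_disjoint_Ioi le_rfl) measurableSet_Ioi
        ((gR_integrable hp _).mono_set Ioc_subset_Ioi_self)
        ((gR_integrable hp _).mono_set (Ioi_subset_Ioi zero_le_one))]
  have h1 : (∫ t in Ioc (0:ℝ) 1, t ^ (a + 2*k - 1) * Real.exp (-t - p/t)) ≤ Greal p a := by
    calc (∫ t in Ioc (0:ℝ) 1, t ^ (a + 2*k - 1) * Real.exp (-t - p/t))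
        ≤ ∫ t in Ioc (0:ℝ) 1, t ^ (a - 1) * Real.exp (-t - p/t) := by
          refine setIntegral_mono_on ((gR_integrable hp _).mono_set Ioc_subset_Ioi_self)
            ((gR_integrable hp _).mono_set Ioc_subset_Ioi_self) measurableSet_Ioc
            fun t ht => ?_
          refine mul_le_mul_of_nonneg_right ?_ (Real.exp_pos _).le
          refine Real.rpow_le_rpow_of_exponent_ge ht.1 ht.2 ?_
          have : (0:ℝ) ≤ 2*k := by positivity
          linarith
      _ ≤ Greal p a := by
          refine setIntegral_mono_set (gR_integrable hp a) ?_
            (HasSubset.Subset.eventuallyLE Ioc_subset_Ioi_self)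
          filter_upwards [ae_restrict_mem measurableSet_Ioi] with t ht
          have : (0:ℝ) < t := ht
          positivity
  have h2 : (∫ t in Ioi (1:ℝ), t ^ (a + 2*k - 1) * Real.exp (-t - p/t))
      ≤ ((m + 2*k).factorial : ℝ) := by
    have hmk : (0:ℝ) < ((m + 2*k : ℕ) : ℝ) := by positivity
    calc (∫ t in Ioi (1:ℝ), t ^ (a + 2*k - 1) * Real.exp (-t - p/t))
        ≤ ∫ t in Ioi (1:ℝ), Real.exp (-t) * t ^ (((m + 2*k : ℕ):ℝ) - 1) := by
          refine setIntegral_mono_on ((gR_integrable hp _).mono_set (Ioi_subset_Ioi zero_le_one))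
            ((Real.GammaIntegral_convergent hmk).mono_set (Ioi_subset_Ioi zero_le_one))
            measurableSet_Ioi fun t ht => ?_
          have ht1 : (1:ℝ) < t := ht
          have ht0 : (0:ℝ) < t := lt_trans zero_lt_one ht1
          calc t ^ (a + 2*k - 1) * Real.exp (-t - p/t)
              ≤ t ^ (((m + 2*k : ℕ):ℝ) - 1) * Real.exp (-t) := by
                refine mul_le_mul (Real.rpow_le_rpow_of_exponent_le ht1.le ?_)
                  (Real.exp_le_exp.mpr (by nlinarith [div_pos hp ht0]))
                  (Real.exp_pos _).le (by positivity)
                push_cast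
                linarith
            _ = Real.exp (-t) * t ^ (((m + 2*k : ℕ):ℝ) - 1) := mul_comm _ _
      _ ≤ ∫ t in Ioi (0:ℝ), Real.exp (-t) * t ^ (((m + 2*k : ℕ):ℝ) - 1) := by
          refine setIntegral_mono_set (Real.GammaIntegral_convergent hmk) ?_
            (HasSubset.Subset.eventuallyLE (Ioi_subset_Ioi zero_le_one))
          filter_upwards [ae_restrict_mem measurableSet_Ioi] with t ht
          have : (0:ℝ) < t := ht
          positivity
      _ = Real.Gamma ((m + 2*k : ℕ):ℝ) := (Real.Gamma_eq_integral hmk).symm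
      _ ≤ ((m + 2*k).factorial : ℝ) := by
          obtain ⟨j, hj⟩ : ∃ j, m + 2*k = j + 1 := ⟨m + 2*k - 1, by omega⟩
          rw [hj]
          push_cast
          rw [Real.Gamma_nat_eq_factorial j]
          exact_mod_cast Nat.cast_le.mpr (Nat.factorial_le (Nat.le_succ j))
  linarith [hsplit, h1, h2]

noncomputable def cIng (ρ x : ℂ) (t : ℝ) : ℂ :=
  (t:ℂ) ^ (x - 1) * Complex.exp (-(t:ℂ) - ρ / (t:ℂ))

noncomputable def cInt (ρ x : ℂ) (u : ℝ) : ℂ :=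
  (u:ℂ) ^ (x-1) * ((1:ℂ) - (u:ℂ)) ^ (-x-1) *
    Complex.exp (-((u:ℂ)^2 + ρ * ((1:ℂ)-(u:ℂ))^2) / ((u:ℂ) * ((1:ℂ)-(u:ℂ))))

noncomputable def rInt (p a : ℝ) (u : ℝ) : ℝ :=
  u ^ (a-1) * (1-u) ^ (-a-1) * Real.exp (-(u^2 + p*(1-u)^2) / (u*(1-u)))

lemma cIng_norm (ρ : ℂ) {x : ℂ} {t : ℝ} (ht : 0 < t) :
    ‖cIng ρ x t‖ = t ^ (x.re-1) * Real.exp (-t - ρ.re/t) := by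
  rw [cIng, norm_mul,
    Complex.norm_cpow_eq_rpow_re_of_pos ht, Complex.norm_exp]
  simp [Complex.sub_re, Complex.neg_re, Complex.div_ofReal_re, Complex.ofReal_re]

lemma cIng_integrable {ρ : ℂ} (hρ : 0 < ρ.re) (x : ℂ) :
    IntegrableOn (cIng ρ x) (Ioi (0:ℝ)) := by
  refine Integrable.mono' (gR_integrable hρ x.re) ?_ ?_
  · refine (ContinuousOn.aestronglyMeasurable ?_ measurableSet_Ioi)
    intro t ht
    have ht0 : (0:ℝ) < t := ht
    refine ContinuousAt.continuousWithinAt ?_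
    have h1 : ContinuousAt (fun t : ℝ => (t:ℂ) ^ (x-1)) t := by
      exact (continuousAt_cpow_const (Complex.ofReal_mem_slitPlane.mpr ht0)).comp
        Complex.continuous_ofReal.continuousAt
    have h2 : ContinuousAt (fun t : ℝ => Complex.exp (-(t:ℂ) - ρ / (t:ℂ))) t := by
      refine Complex.continuous_exp.continuousAt.comp ?_
      refine ContinuousAt.sub (Complex.continuous_ofReal.continuousAt.neg) ?_
      exact continuousAt_const.div Complex.continuous_ofReal.continuousAt
        (Complex.ofReal_ne_zero.mpr (ne_of_gt ht0))
    exact h1.mul h2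
  · rw [ae_restrict_iff' measurableSet_Ioi]
    exact ae_of_all _ fun t ht => le_of_eq (cIng_norm ρ ht)

lemma cInt_pointwise (ρ x : ℂ) {u : ℝ} (hu : u ∈ Ioo (0:ℝ) 1) :
    (((1-u)^2)⁻¹ : ℝ) • cIng ρ x (u / (1 - u)) = cInt ρ x u := by
  obtain ⟨hu0, hu1⟩ := hu
  have h1u : (0:ℝ) < 1 - u := by linarith
  have h1uC : ((1-u : ℝ):ℂ) ≠ 0 := Complex.ofReal_ne_zero.mpr (ne_of_gt h1u)
  have huC : ((u : ℝ):ℂ) ≠ 0 := Complex.ofReal_ne_zero.mpr (ne_of_gt hu0)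
  have hcast : ((1:ℂ) - (u:ℂ)) = ((1-u : ℝ):ℂ) := by push_cast; ring
  rw [cIng, cInt, Complex.real_smul, hcast]
  rw [ofReal_div_cpow hu0 h1u]
  have hsq : ((((1-u)^2)⁻¹ : ℝ) : ℂ) = ((1-u:ℝ):ℂ) ^ (-2 : ℂ) := by
    rw [show (-2:ℂ) = -((2:ℕ):ℂ) by norm_num, Complex.cpow_neg, Complex.cpow_natCast]
    push_cast
    ring
  have hexp : -((u / (1-u) : ℝ):ℂ) - ρ / ((u / (1-u) : ℝ):ℂ) =
      -((u:ℂ)^2 + ρ * ((1-u:ℝ):ℂ)^2) / ((u:ℂ) * ((1-u:ℝ):ℂ)) := by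
    have h1uC' : (1:ℂ) - (u:ℂ) ≠ 0 := by rw [hcast]; exact h1uC
    push_cast
    field_simp
    ring
  rw [hsq, hexp]
  have hcomb : ((1-u:ℝ):ℂ) ^ (-(x-1)) * ((1-u:ℝ):ℂ) ^ (-2:ℂ) = ((1-u:ℝ):ℂ) ^ (-x-1) := by
    rw [← Complex.cpow_add _ _ h1uC]
    congr 1
    ring
  rw [← hcomb]
  ring

lemma extGamma_eq (ρ x : ℂ) :
    extGamma ρ x = ∫ u in Ioo (0:ℝ) 1, cInt ρ x u := by
  have h0 : extGamma ρ x = ∫ t in Ioi (0:ℝ), cIng ρ x t := rfl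
  rw [h0, subst_integral (cIng ρ x)]
  exact setIntegral_congr_fun measurableSet_Ioo fun u hu => cInt_pointwise ρ x hu

lemma cInt_integrableOn {ρ : ℂ} (hρ : 0 < ρ.re) (x : ℂ) :
    IntegrableOn (cInt ρ x) (Ioo (0:ℝ) 1) := by
  refine ((subst_integrableOn (cIng ρ x) (cIng_integrable hρ x)).congr_fun
    (fun u hu => cInt_pointwise ρ x hu) measurableSet_Ioo)

lemma rInt_pointwise (p a : ℝ) {u : ℝ} (hu : u ∈ Ioo (0:ℝ) 1) :
    (((1-u)^2)⁻¹ : ℝ) • ((u/(1-u)) ^ (a-1) * Real.exp (-(u/(1-u)) - p/(u/(1-u)))) =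
      rInt p a u := by
  obtain ⟨hu0, hu1⟩ := hu
  have h1u : (0:ℝ) < 1 - u := by linarith
  have hq : (0:ℝ) < u / (1-u) := div_pos hu0 h1u
  rw [rInt, smul_eq_mul]
  have hpow : (u/(1-u)) ^ (a-1) = u ^ (a-1) * (1-u) ^ (-(a-1)) := by
    rw [Real.div_rpow hu0.le h1u.le, Real.rpow_neg h1u.le, div_eq_mul_inv]
  have hsq : (((1-u)^2)⁻¹ : ℝ) = (1-u) ^ (-2 : ℝ) := by
    rw [show (-2:ℝ) = -((2:ℕ):ℝ) by norm_num, Real.rpow_neg h1u.le, Real.rpow_natCast]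
  have hcomb : (1-u) ^ (-(a-1)) * (1-u) ^ (-2:ℝ) = (1-u) ^ (-a-1) := by
    rw [← Real.rpow_add h1u]
    congr 1
    ring
  have hexp : -(u/(1-u)) - p/(u/(1-u)) = -(u^2 + p*(1-u)^2) / (u*(1-u)) := by
    field_simp
    ring
  rw [hpow, hsq, hexp, ← hcomb]
  ring

lemma integral_rInt {p : ℝ} (hp : 0 < p) (a : ℝ) :
    ∫ u in Ioo (0:ℝ) 1, rInt p a u = Greal p a := by
  rw [Greal, subst_integral (fun t : ℝ => t ^ (a-1) * Real.exp (-t - p/t))]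
  exact setIntegral_congr_fun measurableSet_Ioo fun u hu => (rInt_pointwise p a hu).symm

lemma cInt_norm (ρ x : ℂ) {u : ℝ} (hu : u ∈ Ioo (0:ℝ) 1) :
    ‖cInt ρ x u‖ = rInt ρ.re x.re u := by
  obtain ⟨hu0, hu1⟩ := hu
  have h1u : (0:ℝ) < 1 - u := by linarith
  have hu' : u * (1-u) ≠ 0 := by positivity
  have hcast : ((1:ℂ) - (u:ℂ)) = ((1-u : ℝ):ℂ) := by push_cast; ring
  have hre : ((-((u:ℂ)^2 + ρ*((1:ℂ)-(u:ℂ))^2)) / ((u:ℂ)*((1:ℂ)-(u:ℂ)))).re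
      = -(u^2 + ρ.re*(1-u)^2) / (u*(1-u)) := by
    have e1 : ((u:ℂ)*((1:ℂ)-(u:ℂ))) = ((u*(1-u):ℝ):ℂ) := by push_cast; ring
    have e2 : -((u:ℂ)^2 + ρ*((1:ℂ)-(u:ℂ))^2)
        = ((-(u^2):ℝ):ℂ) - ρ * (((1-u)^2:ℝ):ℂ) := by push_cast; ring
    rw [e2, e1, sub_div, Complex.sub_re, Complex.div_ofReal_re,
      mul_div_assoc, ← Complex.ofReal_div]
    simp only [Complex.mul_re, Complex.ofReal_re, Complex.ofReal_im, mul_zero, sub_zero]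
    field_simp
    ring
  have n1 : ‖(u:ℂ)^(x-1)‖ = u ^ (x.re-1) := by
    rw [Complex.norm_cpow_eq_rpow_re_of_pos hu0]
    norm_num
  have n2 : ‖((1:ℂ)-(u:ℂ))^(-x-1)‖ = (1-u) ^ (-x.re-1) := by
    rw [hcast, Complex.norm_cpow_eq_rpow_re_of_pos h1u]
    norm_num
  have n3 : ‖Complex.exp ((-((u:ℂ)^2 + ρ*((1:ℂ)-(u:ℂ))^2)) / ((u:ℂ)*((1:ℂ)-(u:ℂ))))‖
      = Real.exp (-(u^2 + ρ.re*(1-u)^2) / (u*(1-u))) := by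
    rw [Complex.norm_exp, hre]
  rw [cInt, rInt, norm_mul, norm_mul, n1, n2, n3]

lemma integral_cInt_norm {ρ : ℂ} (hρ : 0 < ρ.re) (x : ℂ) :
    ∫ u in Ioo (0:ℝ) 1, ‖cInt ρ x u‖ = Greal ρ.re x.re := by
  rw [← integral_rInt hρ x.re]
  exact setIntegral_congr_fun measurableSet_Ioo fun u hu => cInt_norm ρ x hu

lemma add_nat_ne_zero {a : ℂ} (ha : 0 < a.re) (k : ℕ) : a + (k:ℂ) ≠ 0 := by
  intro h
  have : (a + (k:ℂ)).re = 0 := by rw [h]; simp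
  rw [Complex.add_re, Complex.natCast_re] at this
  have : (0:ℝ) < a.re + k := by positivity
  linarith

lemma poch_eq_prod {a : ℂ} (ha : 0 < a.re) (k : ℕ) :
    poch a k = ∏ j ∈ Finset.range k, (a + (j:ℂ)) := by
  induction k with
  | zero =>
      simp only [poch, Nat.cast_zero, add_zero, Finset.range_zero, Finset.prod_empty]
      exact div_self (Complex.Gamma_ne_zero_of_re_pos ha)
  | succ k ih =>
      have hak : a + (k:ℂ) ≠ 0 := add_nat_ne_zero ha k
      have hΓa : Complex.Gamma a ≠ 0 := Complex.Gamma_ne_zero_of_re_pos ha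
      rw [poch, show ((k+1 : ℕ):ℂ) = (k:ℂ) + 1 by push_cast; ring, ← add_assoc,
        Complex.Gamma_add_one _ hak, Finset.prod_range_succ, ← ih, poch]
      field_simp

lemma norm_poch_ge {a : ℂ} (ha : 0 < a.re) (k : ℕ) :
    (∏ j ∈ Finset.range k, (a.re + (j:ℝ))) ≤ ‖poch a k‖ := by
  rw [poch_eq_prod ha, norm_prod]
  refine Finset.prod_le_prod (fun j _ => by positivity) (fun j _ => ?_)
  calc a.re + (j:ℝ) = (a + (j:ℂ)).re := by simp
    _ ≤ ‖a + (j:ℂ)‖ := Complex.re_le_norm _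
    _ = ‖a + (j:ℂ)‖ := rfl

lemma prod_shift_pos {α : ℝ} (hα : 0 < α) (k : ℕ) :
    0 < ∏ j ∈ Finset.range k, (α + (j:ℝ)) :=
  Finset.prod_pos fun j _ => by positivity

lemma aux_summable {q : ℝ} (hq : 0 ≤ q) (m : ℕ) {α β γ : ℝ}
    (hα : 0 < α) (hβ : 0 < β) (hγ : 0 < γ) :
    Summable (fun k : ℕ => q^k * ((m + 2*k).factorial : ℝ) /
      ((∏ j ∈ Finset.range k, (α + (j:ℝ))) * (∏ j ∈ Finset.range k, (β + (j:ℝ))) *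
       (∏ j ∈ Finset.range k, (γ + (j:ℝ))) * (k.factorial : ℝ))) := by
  set f : ℕ → ℝ := fun k => q^k * ((m + 2*k).factorial : ℝ) /
      ((∏ j ∈ Finset.range k, (α + (j:ℝ))) * (∏ j ∈ Finset.range k, (β + (j:ℝ))) *
       (∏ j ∈ Finset.range k, (γ + (j:ℝ))) * (k.factorial : ℝ)) with hf
  have hfnn : ∀ k, 0 ≤ f k := by
    intro k
    have := prod_shift_pos hα k
    have := prod_shift_pos hβ k
    have := prod_shift_pos hγ k
    positivity
  refine summable_of_ratio_norm_eventually_le (r := 1/2) (by norm_num) ?_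
  rw [Filter.eventually_atTop]
  refine ⟨m + 2 + ⌈32*q⌉₊, fun k hk => ?_⟩
  have hkm : m + 2 ≤ k := le_trans (Nat.le_add_right _ _) hk
  have hk1 : 1 ≤ k := by omega
  have hk0 : (0:ℝ) < k := by exact_mod_cast Nat.lt_of_lt_of_le Nat.zero_lt_one hk1
  have hkq : 32*q ≤ (k:ℝ) := by
    calc 32*q ≤ (⌈32*q⌉₊ : ℝ) := Nat.le_ceil _
      _ ≤ (k:ℝ) := by exact_mod_cast le_trans (Nat.le_add_left _ _) hk
  have hkmR : (m:ℝ) + 2 ≤ k := by exact_mod_cast hkm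
  have hPa := prod_shift_pos hα k
  have hPb := prod_shift_pos hβ k
  have hPg := prod_shift_pos hγ k
  have hfact : (0:ℝ) < (k.factorial : ℝ) := by exact_mod_cast k.factorial_pos
  set R : ℝ := q*(m+2*(k:ℝ)+1)*(m+2*(k:ℝ)+2)/((α+k)*(β+k)*(γ+k)*(k+1)) with hR
  have hne1 : α + (k:ℝ) ≠ 0 := by positivity
  have hne2 : β + (k:ℝ) ≠ 0 := by positivity
  have hne3 : γ + (k:ℝ) ≠ 0 := by positivity
  have hne4 : (k:ℝ) + 1 ≠ 0 := by positivity
  have hnePa := ne_of_gt hPa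
  have hnePb := ne_of_gt hPb
  have hnePg := ne_of_gt hPg
  have hnef := ne_of_gt hfact
  have hstep : f (k+1) = f k * R := by
    rw [hf, hR]
    simp only
    have e1 : m + 2*(k+1) = (m + 2*k) + 1 + 1 := by ring
    rw [Finset.prod_range_succ, Finset.prod_range_succ, Finset.prod_range_succ, e1,
      Nat.factorial_succ, Nat.factorial_succ, Nat.factorial_succ, pow_succ]
    push_cast
    field_simp
    ring
  have hden : (k:ℝ)*k*k*k ≤ (α+k)*(β+k)*(γ+k)*(k+1) := by
    have h1 : (k:ℝ) ≤ α+k := by linarith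
    have h2 : (k:ℝ) ≤ β+k := by linarith
    have h3 : (k:ℝ) ≤ γ+k := by linarith
    have h4 : (k:ℝ) ≤ k+1 := by linarith
    gcongr <;> positivity
  have hnum : q*(m+2*(k:ℝ)+1)*(m+2*(k:ℝ)+2) ≤ q*(16*k^2) := by
    have h1 : (m:ℝ)+2*k+1 ≤ 4*k := by linarith
    have h2 : (m:ℝ)+2*k+2 ≤ 4*k := by linarith
    calc q*(m+2*(k:ℝ)+1)*(m+2*(k:ℝ)+2) ≤ q*(4*k)*(4*k) := by
          refine mul_le_mul (mul_le_mul_of_nonneg_left h1 hq) h2 (by linarith) (by positivity)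
      _ = q*(16*k^2) := by ring
  have hRle : R ≤ 1/2 := by
    rw [hR]
    calc q*(m+2*(k:ℝ)+1)*(m+2*(k:ℝ)+2)/((α+k)*(β+k)*(γ+k)*(k+1))
        ≤ q*(16*k^2)/((k:ℝ)*k*k*k) := by
          refine div_le_div₀ (by positivity) hnum (by positivity) hden
      _ = 16*q/k^2 := by field_simp
      _ ≤ 1/2 := by
          rw [div_le_div_iff₀ (by positivity) (by norm_num)]
          nlinarith
  have hR0 : 0 ≤ R := by
    rw [hR]
    positivity
  rw [Real.norm_of_nonneg (hfnn _), Real.norm_of_nonneg (hfnn _), hstep]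
  calc f k * R ≤ f k * (1/2) := mul_le_mul_of_nonneg_left hRle (hfnn k)
    _ = 1/2 * f k := by ring
noncomputable def Pk (ν : ℂ) (k : ℕ) : ℂ :=
  poch (ν+1) k * poch ((ν+1)/2) k * poch ((ν+2)/2) k * (k.factorial : ℂ)

noncomputable def Fk (b c ν ρ : ℂ) (z : ℝ) (k : ℕ) (u : ℝ) : ℂ :=
  (u:ℂ) ^ (c + ν - 1) * ((1:ℂ) - (u:ℂ)) ^ (-c - ν - 1) *
    Complex.exp (-((u:ℂ) ^ 2 + ρ * ((1:ℂ) - (u:ℂ)) ^ 2) / ((u:ℂ) * ((1:ℂ) - (u:ℂ)))) *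
    ((-b * (z:ℂ) ^ 2 * (u:ℂ) ^ 2 / (16 * ((1:ℂ) - (u:ℂ)) ^ 2)) ^ k / Pk ν k)

lemma ne_zero_of_re_pos' {w : ℂ} (h : 0 < w.re) : w ≠ 0 := by
  intro hw
  rw [hw] at h
  simp at h

lemma re_div_two (w : ℂ) : (w/2).re = w.re/2 := by
  rw [show (2:ℂ) = ((2:ℝ):ℂ) by norm_num, Complex.div_ofReal_re]

lemma poch_succ {a : ℂ} (ha : 0 < a.re) (k : ℕ) :
    poch a (k+1) = poch a k * (a + (k:ℂ)) := by
  rw [poch_eq_prod ha, poch_eq_prod ha, Finset.prod_range_succ]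

lemma poch_zero' {a : ℂ} (ha : 0 < a.re) : poch a 0 = 1 := by
  rw [poch_eq_prod ha]; simp

lemma poch_ne_zero {a : ℂ} (ha : 0 < a.re) (k : ℕ) : poch a k ≠ 0 := by
  rw [poch_eq_prod ha]
  refine Finset.prod_ne_zero_iff.mpr fun j _ => ne_zero_of_re_pos' ?_
  rw [Complex.add_re, Complex.natCast_re]
  positivity

lemma Gamma_nu_k {ν : ℂ} (hν : -1 < ν.re) (k : ℕ) :
    Complex.Gamma (ν + (k:ℂ) + 1) = Complex.Gamma (ν+1) * poch (ν+1) k := by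
  have hΓν : Complex.Gamma (ν+1) ≠ 0 := Complex.Gamma_ne_zero_of_re_pos (by
    rw [Complex.add_re, Complex.one_re]; linarith)
  rw [poch, mul_comm, div_mul_cancel₀ _ hΓν]
  congr 1
  ring

lemma Gamma_nu_2k {ν : ℂ} (hν : -1 < ν.re) (k : ℕ) :
    Complex.Gamma (ν + 2*(k:ℂ) + 1) =
      Complex.Gamma (ν+1) * poch ((ν+1)/2) k * poch ((ν+2)/2) k * 4^k := by
  have hβ : 0 < ((ν+1)/2).re := by
    rw [re_div_two, Complex.add_re, Complex.one_re]; linarith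
  have hγ : 0 < ((ν+2)/2).re := by
    rw [re_div_two, Complex.add_re]
    have : (2:ℂ).re = 2 := by norm_num
    rw [this]; linarith
  induction k with
  | zero => simp [poch_zero' hβ, poch_zero' hγ]
  | succ k ih =>
      have hkR : (0:ℝ) ≤ (k:ℝ) := Nat.cast_nonneg k
      have hre1 : (ν + 2*(k:ℂ) + 1).re = ν.re + 2*(k:ℝ) + 1 := by simp
      have hre2 : (ν + 2*(k:ℂ) + 2).re = ν.re + 2*(k:ℝ) + 2 := by
        simp [Complex.add_re]
      have h1 : ν + 2*(k:ℂ) + 1 ≠ 0 := ne_zero_of_re_pos' (by rw [hre1]; linarith)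
      have h2 : ν + 2*(k:ℂ) + 2 ≠ 0 := ne_zero_of_re_pos' (by rw [hre2]; linarith)
      have e1 : ν + 2*((k+1 : ℕ):ℂ) + 1 = (ν + 2*(k:ℂ) + 2) + 1 := by push_cast; ring
      have e2 : ν + 2*(k:ℂ) + 2 = (ν + 2*(k:ℂ) + 1) + 1 := by ring
      rw [e1, Complex.Gamma_add_one _ h2, e2, Complex.Gamma_add_one _ h1, ← e2, ih,
        poch_succ hβ, poch_succ hγ, pow_succ]
      ring

lemma Fk_eq {b c ν ρ : ℂ} {z : ℝ} (k : ℕ) {u : ℝ} (hu : u ∈ Ioo (0:ℝ) 1) :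
    Fk b c ν ρ z k u = ((-b * (z:ℂ)^2 / 16)^k / Pk ν k) * cInt ρ (c + ν + 2*(k:ℂ)) u := by
  obtain ⟨hu0, hu1⟩ := hu
  have h1u : (0:ℝ) < 1 - u := by linarith
  have huC : ((u:ℝ):ℂ) ≠ 0 := Complex.ofReal_ne_zero.mpr (ne_of_gt hu0)
  have h1uC : ((1:ℂ) - (u:ℂ)) ≠ 0 := by
    rw [show ((1:ℂ) - (u:ℂ)) = ((1-u : ℝ):ℂ) by push_cast; ring]
    exact Complex.ofReal_ne_zero.mpr (ne_of_gt h1u)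
  have e : -b * (z:ℂ)^2 * (u:ℂ)^2 / (16 * ((1:ℂ)-(u:ℂ))^2)
      = (-b * (z:ℂ)^2 / 16) * ((u:ℂ)^2 / ((1:ℂ)-(u:ℂ))^2) := by
    rw [div_mul_div_comm]
  have step1 : (-b * (z:ℂ)^2 * (u:ℂ)^2 / (16 * ((1:ℂ)-(u:ℂ))^2))^k
      = (-b * (z:ℂ)^2 / 16)^k * ((u:ℂ)^(2*k) * (((1:ℂ)-(u:ℂ))^(2*k))⁻¹) := by
    rw [e, mul_pow]
    congr 1
    rw [div_pow, ← pow_mul, ← pow_mul, div_eq_mul_inv]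
  have step3 : (u:ℂ)^(c+ν-1) * ((u:ℂ)^(2*k : ℕ) : ℂ) = (u:ℂ)^(c+ν+2*(k:ℂ)-1) := by
    rw [← Complex.cpow_natCast, ← Complex.cpow_add _ _ huC]
    congr 1
    push_cast
    ring
  have step4 : ((1:ℂ)-(u:ℂ))^(-c-ν-1) * ((((1:ℂ)-(u:ℂ))^(2*k : ℕ) : ℂ))⁻¹
      = ((1:ℂ)-(u:ℂ))^(-(c+ν+2*(k:ℂ))-1) := by
    rw [← Complex.cpow_natCast, ← Complex.cpow_neg, ← Complex.cpow_add _ _ h1uC]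
    congr 1
    push_cast
    ring
  rw [Fk, cInt, step1, ← step3, ← step4]
  ring

end Stmt3Aux

theorem stmt3 (b c ν ρ : ℂ) (hρ : 0 < ρ.re) (hc : 0 < c.re) (hν : -1 < ν.re)
    (z : ℝ) (hz : 0 < z) :
    unifiedG b c ν ρ (z:ℂ) =
      ((z:ℂ) / 2) ^ ν / (Complex.Gamma (ν + 1) ^ 2 * Complex.Gamma c) *
        ∫ u in Ioo (0:ℝ) 1, (u:ℂ) ^ (c + ν - 1) * ((1:ℂ) - (u:ℂ)) ^ (-c - ν - 1) *
          Complex.exp (-((u:ℂ) ^ 2 + ρ * ((1:ℂ) - (u:ℂ)) ^ 2) / ((u:ℂ) * ((1:ℂ) - (u:ℂ)))) *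
          hyp0F3 (ν + 1) ((ν + 1) / 2) ((ν + 2) / 2)
            (-b * (z:ℂ) ^ 2 * (u:ℂ) ^ 2 / (16 * ((1:ℂ) - (u:ℂ)) ^ 2)) := by
  classical
  have hν1 : 0 < (ν+1).re := by rw [Complex.add_re, Complex.one_re]; linarith
  have hβ : 0 < ((ν+1)/2).re := by
    rw [Stmt3Aux.re_div_two, Complex.add_re, Complex.one_re]; linarith
  have hγ : 0 < ((ν+2)/2).re := by
    rw [Stmt3Aux.re_div_two, Complex.add_re]
    have h2 : (2:ℂ).re = 2 := by norm_num
    rw [h2]; linarith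
  have hΓν : Complex.Gamma (ν+1) ≠ 0 := Complex.Gamma_ne_zero_of_re_pos hν1
  have hΓc : Complex.Gamma c ≠ 0 := Complex.Gamma_ne_zero_of_re_pos hc
  -- expand hyp0F3 into the series of Fk
  have hint : ∀ u : ℝ,
      (u:ℂ) ^ (c + ν - 1) * ((1:ℂ) - (u:ℂ)) ^ (-c - ν - 1) *
        Complex.exp (-((u:ℂ) ^ 2 + ρ * ((1:ℂ) - (u:ℂ)) ^ 2) / ((u:ℂ) * ((1:ℂ) - (u:ℂ)))) *
        hyp0F3 (ν + 1) ((ν + 1) / 2) ((ν + 2) / 2)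
          (-b * (z:ℂ) ^ 2 * (u:ℂ) ^ 2 / (16 * ((1:ℂ) - (u:ℂ)) ^ 2))
      = ∑' k : ℕ, Stmt3Aux.Fk b c ν ρ z k u := by
    intro u
    rw [hyp0F3, ← tsum_mul_left]
    simp only [Stmt3Aux.Fk, Stmt3Aux.Pk]
  have hFint : ∀ k : ℕ, IntegrableOn (Stmt3Aux.Fk b c ν ρ z k) (Ioo (0:ℝ) 1) := fun k =>
    MeasureTheory.IntegrableOn.congr_fun
      ((Stmt3Aux.cInt_integrableOn hρ (c+ν+2*(k:ℂ))).const_mul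
        ((-b*(z:ℂ)^2/16)^k / Stmt3Aux.Pk ν k))
      (fun u hu => (Stmt3Aux.Fk_eq k hu).symm) measurableSet_Ioo
  have hIeq : ∀ k : ℕ, (∫ u in Ioo (0:ℝ) 1, Stmt3Aux.Fk b c ν ρ z k u)
      = ((-b*(z:ℂ)^2/16)^k / Stmt3Aux.Pk ν k) * extGamma ρ (c+ν+2*(k:ℂ)) := fun k => by
    rw [setIntegral_congr_fun measurableSet_Ioo (fun u hu => Stmt3Aux.Fk_eq k hu),
      MeasureTheory.integral_const_mul, ← Stmt3Aux.extGamma_eq]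
  have hre : ∀ k : ℕ, (c+ν+2*(k:ℂ)).re = c.re + ν.re + 2*(k:ℝ) := by
    intro k; simp
  have hFnorm : ∀ k : ℕ, (∫ u in Ioo (0:ℝ) 1, ‖Stmt3Aux.Fk b c ν ρ z k u‖)
      = ‖(-b*(z:ℂ)^2/16)^k / Stmt3Aux.Pk ν k‖ *
        Stmt3Aux.Greal ρ.re (c.re + ν.re + 2*(k:ℝ)) := by
    intro k
    have e : EqOn (fun u : ℝ => ‖Stmt3Aux.Fk b c ν ρ z k u‖)
        (fun u : ℝ => ‖(-b*(z:ℂ)^2/16)^k / Stmt3Aux.Pk ν k‖ *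
          ‖Stmt3Aux.cInt ρ (c+ν+2*(k:ℂ)) u‖) (Ioo (0:ℝ) 1) := fun u hu => by
      simp only
      rw [Stmt3Aux.Fk_eq k hu, norm_mul]
    rw [setIntegral_congr_fun measurableSet_Ioo e, MeasureTheory.integral_const_mul,
      Stmt3Aux.integral_cInt_norm hρ, hre k]
  -- summability of the integrals of norms
  set m : ℕ := max 1 ⌈c.re + ν.re⌉₊ with hm
  have hm1 : 1 ≤ m := le_max_left _ _
  have hma : c.re + ν.re ≤ (m:ℝ) := by
    refine le_trans (Nat.le_ceil _) ?_
    exact_mod_cast le_max_right 1 ⌈c.re + ν.re⌉₊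
  set q : ℝ := ‖-b*(z:ℂ)^2/16‖ with hq
  have hq0 : 0 ≤ q := norm_nonneg _
  set G₀ : ℝ := Stmt3Aux.Greal ρ.re (c.re + ν.re) with hG₀
  have hG₀0 : 0 ≤ G₀ := Stmt3Aux.Greal_nonneg _ _
  set Q : ℕ → ℝ := fun k => (∏ j ∈ Finset.range k, ((ν+1).re + (j:ℝ))) *
      (∏ j ∈ Finset.range k, (((ν+1)/2).re + (j:ℝ))) *
      (∏ j ∈ Finset.range k, (((ν+2)/2).re + (j:ℝ))) * (k.factorial : ℝ) with hQdef
  have hQpos : ∀ k, 0 < Q k := fun k => by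
    have h1 := Stmt3Aux.prod_shift_pos hν1 k
    have h2 := Stmt3Aux.prod_shift_pos hβ k
    have h3 := Stmt3Aux.prod_shift_pos hγ k
    have h4 : (0:ℝ) < (k.factorial : ℝ) := by exact_mod_cast k.factorial_pos
    exact mul_pos (mul_pos (mul_pos h1 h2) h3) h4
  have hPQ : ∀ k, Q k ≤ ‖Stmt3Aux.Pk ν k‖ := fun k => by
    have h1 := Stmt3Aux.norm_poch_ge hν1 k
    have h2 := Stmt3Aux.norm_poch_ge hβ k
    have h3 := Stmt3Aux.norm_poch_ge hγ k
    have p1 := Stmt3Aux.prod_shift_pos hν1 k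
    have p2 := Stmt3Aux.prod_shift_pos hβ k
    have p3 := Stmt3Aux.prod_shift_pos hγ k
    have h4 : ‖((k.factorial : ℕ) : ℂ)‖ = (k.factorial : ℝ) := by
      simp
    rw [Stmt3Aux.Pk, norm_mul, norm_mul, norm_mul, h4, hQdef]
    refine mul_le_mul ?_ le_rfl (by positivity) (by positivity)
    refine mul_le_mul ?_ h3 p3.le (by positivity)
    exact mul_le_mul h1 h2 p2.le (norm_nonneg _)
  have hbound : ∀ k : ℕ, (∫ u in Ioo (0:ℝ) 1, ‖Stmt3Aux.Fk b c ν ρ z k u‖)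
      ≤ (G₀+1) * (q^k * (((m+2*k).factorial : ℕ) : ℝ) / Q k) := by
    intro k
    rw [hFnorm k, norm_div, norm_pow, ← hq]
    have hGk : Stmt3Aux.Greal ρ.re (c.re + ν.re + 2*(k:ℝ))
        ≤ G₀ + (((m+2*k).factorial : ℕ) : ℝ) :=
      Stmt3Aux.Greal_le hρ (c.re + ν.re) m hm1 hma k
    have hGk0 : 0 ≤ Stmt3Aux.Greal ρ.re (c.re + ν.re + 2*(k:ℝ)) :=
      Stmt3Aux.Greal_nonneg _ _
    have hX : (1:ℝ) ≤ (((m+2*k).factorial : ℕ) : ℝ) := by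
      exact_mod_cast (m+2*k).factorial_pos
    calc q^k / ‖Stmt3Aux.Pk ν k‖ * Stmt3Aux.Greal ρ.re (c.re + ν.re + 2*(k:ℝ))
        ≤ q^k / Q k * (G₀ + (((m+2*k).factorial : ℕ) : ℝ)) := by
          refine mul_le_mul ?_ hGk hGk0 (div_nonneg (by positivity) (hQpos k).le)
          exact div_le_div_of_nonneg_left (by positivity) (hQpos k) (hPQ k)
      _ ≤ q^k / Q k * ((G₀+1) * (((m+2*k).factorial : ℕ) : ℝ)) := by
          refine mul_le_mul_of_nonneg_left (by nlinarith) (div_nonneg (by positivity) (hQpos k).le)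
      _ = (G₀+1) * (q^k * (((m+2*k).factorial : ℕ) : ℝ) / Q k) := by
          ring
  have hsum : Summable (fun k : ℕ => ∫ u in Ioo (0:ℝ) 1, ‖Stmt3Aux.Fk b c ν ρ z k u‖) := by
    have haux : Summable (fun k : ℕ => (G₀+1) * (q^k * (((m+2*k).factorial : ℕ) : ℝ) / Q k)) := by
      simp only [hQdef]
      exact (Stmt3Aux.aux_summable hq0 m hν1 hβ hγ).mul_left (G₀+1)
    exact Summable.of_nonneg_of_le
      (fun k => MeasureTheory.integral_nonneg fun u => norm_nonneg _) hbound haux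
  have hswap := MeasureTheory.integral_tsum_of_summable_integral_norm
    (μ := volume.restrict (Ioo (0:ℝ) 1)) hFint hsum
  have hR1 : (∫ u in Ioo (0:ℝ) 1, (u:ℂ) ^ (c + ν - 1) * ((1:ℂ) - (u:ℂ)) ^ (-c - ν - 1) *
        Complex.exp (-((u:ℂ) ^ 2 + ρ * ((1:ℂ) - (u:ℂ)) ^ 2) / ((u:ℂ) * ((1:ℂ) - (u:ℂ)))) *
        hyp0F3 (ν + 1) ((ν + 1) / 2) ((ν + 2) / 2)
          (-b * (z:ℂ) ^ 2 * (u:ℂ) ^ 2 / (16 * ((1:ℂ) - (u:ℂ)) ^ 2)))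
      = ∑' k : ℕ, ∫ u in Ioo (0:ℝ) 1, Stmt3Aux.Fk b c ν ρ z k u := by
    rw [hswap]
    exact setIntegral_congr_fun measurableSet_Ioo fun u _ => hint u
  rw [unifiedG, hR1, ← tsum_mul_left]
  refine tsum_congr fun k => ?_
  rw [hIeq k]
  have eArg : c + (2*(k:ℂ) + ν) = c + ν + 2*(k:ℂ) := by ring
  rw [genPoch, eArg]
  have hzc : ((z:ℂ)/2) ≠ 0 :=
    div_ne_zero (Complex.ofReal_ne_zero.mpr hz.ne') two_ne_zero
  have hsplit : ((z:ℂ)/2) ^ (2*(k:ℂ)+ν) = ((z:ℂ)/2) ^ (2*k : ℕ) * ((z:ℂ)/2) ^ ν := by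
    rw [show 2*(k:ℂ)+ν = ((2*k : ℕ):ℂ) + ν by push_cast; ring,
      Complex.cpow_add _ _ hzc, Complex.cpow_natCast]
  have h2k : ((z:ℂ)/2) ^ (2*k : ℕ) = (z:ℂ)^(2*k) / 4^k := by
    rw [div_pow]
    congr 1
    rw [pow_mul]
    norm_num
  have hsk : (-b*(z:ℂ)^2/16)^k = (-b)^k * (z:ℂ)^(2*k) / 16^k := by
    rw [div_pow, mul_pow, ← pow_mul]
  have h16 : (16:ℂ)^k = 4^k * 4^k := by rw [← mul_pow]; norm_num
  have hp1 : poch (ν+1) k ≠ 0 := Stmt3Aux.poch_ne_zero hν1 k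
  have hp2 : poch ((ν+1)/2) k ≠ 0 := Stmt3Aux.poch_ne_zero hβ k
  have hp3 : poch ((ν+2)/2) k ≠ 0 := Stmt3Aux.poch_ne_zero hγ k
  have hkf : ((k.factorial : ℕ) : ℂ) ≠ 0 := Nat.cast_ne_zero.mpr k.factorial_ne_zero
  have h4k : ((4:ℂ))^k ≠ 0 := pow_ne_zero _ (by norm_num)
  rw [hsplit, h2k, Stmt3Aux.Gamma_nu_k hν k, Stmt3Aux.Gamma_nu_2k hν k, hsk, Stmt3Aux.Pk, h16]
  field_simp
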